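/- arXiv:2502.16249 — 2 statements merged into one kernel-verified Lean document; each statement's English description precedes it below -/
import Mathlib

section
/- LION-RNN theorem (equivalence of the bidirectional RNN with full scaled linear attention): for every i with 1 ≤ i ≤ L such that Σ_{j=1}^{L} M_{ij} ⟨q_i, k_j⟩ ≠ 0, the bidirectional RNN output y_i := (y^F_i + y^B_i) / (c^F_i + c^B_i) satisfies y_i = (Σ_{j=1}^{L} M_{ij} ⟨q_i, k_j⟩ v_j) / (Σ_{j=1}^{L} M_{ij} ⟨q_i, k_j⟩); i.e., y_i equals the i-th row of Scale(Q K^⊤ ⊙ M) V, where Scale divides each row of a matrix by its row sum. -/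
open Matrix Finset

/-- Bidirectional decay mask: `M i j = ∏_{t=j+1}^{i} λ_t` for `i > j`,
`M i i = 1`, and `M i j = ∏_{t=i+1}^{j} λ_t` for `i < j`. -/
noncomputable def bidirMask (lam : ℕ → ℝ) (i j : ℕ) : ℝ :=
  if j < i then ∏ t ∈ Finset.Icc (j + 1) i, lam t
  else if i < j then ∏ t ∈ Finset.Icc (i + 1) j, lam t
  else 1

section helpers

variable {d : ℕ}

lemma vecMul_smulMat (c : ℝ) (u : Fin d → ℝ) (A : Matrix (Fin d) (Fin d) ℝ) :
    u ᵥ* (c • A) = c • (u ᵥ* A) := by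
  ext j
  simp [Matrix.vecMul, dotProduct, Finset.mul_sum, mul_left_comm]

lemma vecMul_vmv (u k v : Fin d → ℝ) :
    u ᵥ* vecMulVec k v = (u ⬝ᵥ k) • v := by
  ext j
  simp [Matrix.vecMul, dotProduct, Matrix.vecMulVec_apply, Finset.sum_mul, mul_assoc]

lemma vecMul_sum' (u : Fin d → ℝ) (s : Finset ℕ) (A : ℕ → Matrix (Fin d) (Fin d) ℝ) :
    u ᵥ* (∑ j ∈ s, A j) = ∑ j ∈ s, u ᵥ* A j := by
  ext j
  simp [Matrix.vecMul, dotProduct, Matrix.sum_apply, Finset.mul_sum]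
  rw [Finset.sum_comm]

lemma dotProduct_sum' (u : Fin d → ℝ) (s : Finset ℕ) (w : ℕ → (Fin d → ℝ)) :
    u ⬝ᵥ (∑ j ∈ s, w j) = ∑ j ∈ s, u ⬝ᵥ w j := by
  simp [dotProduct, Finset.sum_apply, Finset.mul_sum]
  rw [Finset.sum_comm]

/-- Closed form for the forward matrix recurrence. -/
lemma SF_closed (L : ℕ) (lam : ℕ → ℝ) (k v : ℕ → (Fin d → ℝ))
    (SF : ℕ → Matrix (Fin d) (Fin d) ℝ) (hSF0 : SF 0 = 0)
    (hSF : ∀ i, 1 ≤ i → i ≤ L → SF i = lam i • SF (i - 1) + vecMulVec (k i) (v i)) :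
    ∀ i, 1 ≤ i → i ≤ L →
      SF i = ∑ j ∈ Finset.Icc 1 i, (∏ t ∈ Finset.Icc (j + 1) i, lam t) • vecMulVec (k j) (v j) := by
  intro i h1 h2
  induction i with
  | zero => omega
  | succ n ih =>
    rcases Nat.eq_or_lt_of_le h1 with h | h
    · have : n = 0 := by omega
      subst this
      rw [hSF 1 le_rfl h2]
      simp [hSF0]
    · have hn1 : 1 ≤ n := by omega
      have hnL : n ≤ L := by omega
      rw [hSF (n + 1) (by omega) h2]
      simp only [Nat.add_sub_cancel]
      rw [ih hn1 hnL]
      rw [← Finset.insert_Icc_right_eq_Icc_add_one (by omega : (1:ℕ) ≤ n + 1),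
        Finset.sum_insert (by simp)]
      rw [Finset.smul_sum]
      rw [add_comm]
      congr 1
      · simp
      · apply Finset.sum_congr rfl
        intro j hj
        simp only [Finset.mem_Icc] at hj
        rw [smul_smul, Finset.prod_Icc_succ_top (by omega), mul_comm]

/-- Closed form for the forward vector recurrence. -/
lemma zF_closed (L : ℕ) (lam : ℕ → ℝ) (k : ℕ → (Fin d → ℝ))
    (zF : ℕ → (Fin d → ℝ)) (hzF0 : zF 0 = 0)
    (hzF : ∀ i, 1 ≤ i → i ≤ L → zF i = lam i • zF (i - 1) + k i) :
    ∀ i, 1 ≤ i → i ≤ L →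
      zF i = ∑ j ∈ Finset.Icc 1 i, (∏ t ∈ Finset.Icc (j + 1) i, lam t) • k j := by
  intro i h1 h2
  induction i with
  | zero => omega
  | succ n ih =>
    rcases Nat.eq_or_lt_of_le h1 with h | h
    · have : n = 0 := by omega
      subst this
      rw [hzF 1 le_rfl h2]
      simp [hzF0]
    · have hn1 : 1 ≤ n := by omega
      have hnL : n ≤ L := by omega
      rw [hzF (n + 1) (by omega) h2]
      simp only [Nat.add_sub_cancel]
      rw [ih hn1 hnL]
      rw [← Finset.insert_Icc_right_eq_Icc_add_one (by omega : (1:ℕ) ≤ n + 1),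
        Finset.sum_insert (by simp), Finset.smul_sum, add_comm]
      congr 1
      · simp
      · apply Finset.sum_congr rfl
        intro j hj
        simp only [Finset.mem_Icc] at hj
        rw [smul_smul, Finset.prod_Icc_succ_top (by omega), mul_comm]

/-- Closed form for the backward matrix recurrence, by downward induction. -/
lemma SB_closed (L : ℕ) (lam : ℕ → ℝ) (k v : ℕ → (Fin d → ℝ))
    (SB : ℕ → Matrix (Fin d) (Fin d) ℝ)
    (hSBL : SB L = vecMulVec (k L) (v L))
    (hSB : ∀ i, 1 ≤ i → i < L → SB i = lam (i + 1) • SB (i + 1) + vecMulVec (k i) (v i)) :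
    ∀ i, 1 ≤ i → i ≤ L →
      SB i = ∑ j ∈ Finset.Icc i L, (∏ t ∈ Finset.Icc (i + 1) j, lam t) • vecMulVec (k j) (v j) := by
  suffices h : ∀ m i, 1 ≤ i → i ≤ L → L - i = m →
      SB i = ∑ j ∈ Finset.Icc i L, (∏ t ∈ Finset.Icc (i + 1) j, lam t) • vecMulVec (k j) (v j) by
    intro i h1 h2; exact h (L - i) i h1 h2 rfl
  intro m
  induction m with
  | zero =>
    intro i h1 h2 hm
    have : i = L := by omega
    subst this
    simp [hSBL, Finset.Icc_self]
  | succ n ih =>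
    intro i h1 h2 hm
    have hiL : i < L := by omega
    rw [hSB i h1 hiL, ih (i + 1) (by omega) (by omega) (by omega)]
    rw [← Finset.insert_Icc_add_one_left_eq_Icc (by omega : i ≤ L), Finset.sum_insert (by simp)]
    rw [Finset.smul_sum, add_comm]
    congr 1
    · simp
    · apply Finset.sum_congr rfl
      intro j hj
      simp only [Finset.mem_Icc] at hj
      rw [smul_smul, ← Finset.prod_insert (by simp : (i+1) ∉ Finset.Icc (i+1+1) j) ]
      rw [Finset.insert_Icc_add_one_left_eq_Icc (by omega)]

/-- Closed form for the backward vector recurrence. -/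
lemma zB_closed (L : ℕ) (lam : ℕ → ℝ) (k : ℕ → (Fin d → ℝ))
    (zB : ℕ → (Fin d → ℝ)) (hzBL : zB L = k L)
    (hzB : ∀ i, 1 ≤ i → i < L → zB i = lam (i + 1) • zB (i + 1) + k i) :
    ∀ i, 1 ≤ i → i ≤ L →
      zB i = ∑ j ∈ Finset.Icc i L, (∏ t ∈ Finset.Icc (i + 1) j, lam t) • k j := by
  suffices h : ∀ m i, 1 ≤ i → i ≤ L → L - i = m →
      zB i = ∑ j ∈ Finset.Icc i L, (∏ t ∈ Finset.Icc (i + 1) j, lam t) • k j by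
    intro i h1 h2; exact h (L - i) i h1 h2 rfl
  intro m
  induction m with
  | zero =>
    intro i h1 h2 hm
    have : i = L := by omega
    subst this
    simp [hzBL, Finset.Icc_self]
  | succ n ih =>
    intro i h1 h2 hm
    have hiL : i < L := by omega
    rw [hzB i h1 hiL, ih (i + 1) (by omega) (by omega) (by omega)]
    rw [← Finset.insert_Icc_add_one_left_eq_Icc (by omega : i ≤ L), Finset.sum_insert (by simp)]
    rw [Finset.smul_sum, add_comm]
    congr 1
    · simp
    · apply Finset.sum_congr rfl
      intro j hj
      simp only [Finset.mem_Icc] at hj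
      rw [smul_smul, ← Finset.prod_insert (by simp : (i+1) ∉ Finset.Icc (i+1+1) j)]
      rw [Finset.insert_Icc_add_one_left_eq_Icc (by omega)]

/-- Abstract combination lemma in any real module. -/
lemma combine {M : Type*} [AddCommGroup M] [Module ℝ M]
    (L i : ℕ) (h1 : 1 ≤ i) (h2 : i ≤ L) (lam : ℕ → ℝ) (w : ℕ → M) :
    (∑ j ∈ Finset.Icc 1 i, (∏ t ∈ Finset.Icc (j + 1) i, lam t) • w j) +
      (∑ j ∈ Finset.Icc i L, (∏ t ∈ Finset.Icc (i + 1) j, lam t) • w j) - w i =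
    ∑ j ∈ Finset.Icc 1 L, bidirMask lam i j • w j := by
  have hsplit : Finset.Icc 1 L = Finset.Icc 1 i ∪ Finset.Icc (i + 1) L := by
    ext x; simp only [Finset.mem_Icc, Finset.mem_union]; omega
  have hdisj : Disjoint (Finset.Icc 1 i) (Finset.Icc (i + 1) L) := by
    rw [Finset.disjoint_left]; intro x hx hx'
    simp only [Finset.mem_Icc] at hx hx'; omega
  rw [hsplit, Finset.sum_union hdisj]
  have hB : Finset.Icc i L = insert i (Finset.Icc (i + 1) L) :=
    (Finset.insert_Icc_add_one_left_eq_Icc h2).symm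
  rw [hB, Finset.sum_insert (by simp)]
  have hii : (∏ t ∈ Finset.Icc (i + 1) i, lam t) = 1 := by
    rw [Finset.Icc_eq_empty (by omega)]; simp
  rw [hii, one_smul]
  have e1 : ∀ j ∈ Finset.Icc 1 i, (∏ t ∈ Finset.Icc (j + 1) i, lam t) • w j
      = bidirMask lam i j • w j := by
    intro j hj
    simp only [Finset.mem_Icc] at hj
    rcases Nat.lt_or_ge j i with h | h
    · simp only [bidirMask]; rw [if_pos h]
    · have : j = i := by omega
      subst this
      simp [bidirMask, hii]
  have e2 : ∀ j ∈ Finset.Icc (i + 1) L, (∏ t ∈ Finset.Icc (i + 1) j, lam t) • w j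
      = bidirMask lam i j • w j := by
    intro j hj
    simp only [Finset.mem_Icc] at hj
    simp only [bidirMask]; rw [if_neg (by omega), if_pos (by omega)]
  rw [Finset.sum_congr rfl e1, Finset.sum_congr rfl e2]
  abel

end helpers

/-- LION-RNN theorem: the bidirectional RNN output
`y_i = (y^F_i + y^B_i) / (c^F_i + c^B_i)` equals the `i`-th row of
`Scale(Q K^⊤ ⊙ M) V`, whenever the full row sum `Σ_j M_{ij} ⟨q_i, k_j⟩` is nonzero. -/
theorem lion_rnn_full_attention_equivalence
    (L d : ℕ) (hL : 0 < L) (hd : 0 < d)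
    (lam : ℕ → ℝ) (q k v : ℕ → (Fin d → ℝ))
    (SF SB : ℕ → Matrix (Fin d) (Fin d) ℝ) (zF zB : ℕ → (Fin d → ℝ))
    (hSF0 : SF 0 = 0)
    (hSF : ∀ i, 1 ≤ i → i ≤ L → SF i = lam i • SF (i - 1) + vecMulVec (k i) (v i))
    (hzF0 : zF 0 = 0)
    (hzF : ∀ i, 1 ≤ i → i ≤ L → zF i = lam i • zF (i - 1) + k i)
    (hSBL : SB L = vecMulVec (k L) (v L))
    (hSB : ∀ i, 1 ≤ i → i < L → SB i = lam (i + 1) • SB (i + 1) + vecMulVec (k i) (v i))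
    (hzBL : zB L = k L)
    (hzB : ∀ i, 1 ≤ i → i < L → zB i = lam (i + 1) • zB (i + 1) + k i)
    (yF yB : ℕ → (Fin d → ℝ)) (cF cB : ℕ → ℝ)
    (hyF : ∀ i, yF i = q i ᵥ* SF i - ((1 / 2) * (q i ⬝ᵥ k i)) • v i)
    (hyB : ∀ i, yB i = q i ᵥ* SB i - ((1 / 2) * (q i ⬝ᵥ k i)) • v i)
    (hcF : ∀ i, cF i = q i ⬝ᵥ zF i - (1 / 2) * (q i ⬝ᵥ k i))
    (hcB : ∀ i, cB i = q i ⬝ᵥ zB i - (1 / 2) * (q i ⬝ᵥ k i)) :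
    ∀ i, 1 ≤ i → i ≤ L →
      (∑ j ∈ Finset.Icc 1 L, bidirMask lam i j * (q i ⬝ᵥ k j)) ≠ 0 →
      (cF i + cB i)⁻¹ • (yF i + yB i) =
        (∑ j ∈ Finset.Icc 1 L, bidirMask lam i j * (q i ⬝ᵥ k j))⁻¹ •
          ∑ j ∈ Finset.Icc 1 L, (bidirMask lam i j * (q i ⬝ᵥ k j)) • v j := by

  intro i h1 h2 hne
  -- the vector identity
  have hvec : yF i + yB i = ∑ j ∈ Finset.Icc 1 L, (bidirMask lam i j * (q i ⬝ᵥ k j)) • v j := by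
    have hF := SF_closed L lam k v SF hSF0 hSF i h1 h2
    have hB := SB_closed L lam k v SB hSBL hSB i h1 h2
    have hqF : q i ᵥ* SF i
        = ∑ j ∈ Finset.Icc 1 i, (∏ t ∈ Finset.Icc (j + 1) i, lam t) • ((q i ⬝ᵥ k j) • v j) := by
      rw [hF, vecMul_sum']
      apply Finset.sum_congr rfl
      intro j _
      rw [vecMul_smulMat, vecMul_vmv]
    have hqB : q i ᵥ* SB i
        = ∑ j ∈ Finset.Icc i L, (∏ t ∈ Finset.Icc (i + 1) j, lam t) • ((q i ⬝ᵥ k j) • v j) := by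
      rw [hB, vecMul_sum']
      apply Finset.sum_congr rfl
      intro j _
      rw [vecMul_smulMat, vecMul_vmv]
    have hcomb := combine L i h1 h2 lam (fun j => (q i ⬝ᵥ k j) • v j)
    rw [hyF, hyB, hqF, hqB]
    have : ∀ j, bidirMask lam i j • ((q i ⬝ᵥ k j) • v j)
        = (bidirMask lam i j * (q i ⬝ᵥ k j)) • v j := fun j => (smul_smul _ _ _)
    simp only [this] at hcomb
    rw [← hcomb]
    have hhalf : ((1 / 2 : ℝ) * (q i ⬝ᵥ k i)) • v i + ((1 / 2 : ℝ) * (q i ⬝ᵥ k i)) • v i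
        = (q i ⬝ᵥ k i) • v i := by
      rw [← add_smul]; ring_nf
    rw [← hhalf]
    abel
  -- the scalar identity
  have hsca : cF i + cB i = ∑ j ∈ Finset.Icc 1 L, bidirMask lam i j * (q i ⬝ᵥ k j) := by
    have hF := zF_closed L lam k zF hzF0 hzF i h1 h2
    have hB := zB_closed L lam k zB hzBL hzB i h1 h2
    have hqF : q i ⬝ᵥ zF i
        = ∑ j ∈ Finset.Icc 1 i, (∏ t ∈ Finset.Icc (j + 1) i, lam t) • (q i ⬝ᵥ k j) := by
      rw [hF, dotProduct_sum']
      apply Finset.sum_congr rfl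
      intro j _
      rw [dotProduct_smul]
      
    have hqB : q i ⬝ᵥ zB i
        = ∑ j ∈ Finset.Icc i L, (∏ t ∈ Finset.Icc (i + 1) j, lam t) • (q i ⬝ᵥ k j) := by
      rw [hB, dotProduct_sum']
      apply Finset.sum_congr rfl
      intro j _
      rw [dotProduct_smul]
      
    have hcomb := combine L i h1 h2 lam (fun j => (q i ⬝ᵥ k j))
    simp only [smul_eq_mul] at hcomb
    rw [hcF, hcB, hqF, hqB, ← hcomb]
    simp only [smul_eq_mul]
    ring
  rw [hvec, hsca]
end

section
/- LION-lit mapping (bidirectional vanilla linear attention): if λ_i = 1 for all i, then for every i the corrected outputs satisfy y^F_i + y^B_i = Σ_{j=1}^{L} ⟨q_i, k_j⟩ v_j and c^F_i + c^B_i = Σ_{j=1}^{L} ⟨q_i, k_j⟩; hence the non-scaled stacked outputs equal Q K^⊤ V, and whenever Σ_{j=1}^{L} ⟨q_i, k_j⟩ ≠ 0 the scaled output (y^F_i + y^B_i)/(c^F_i + c^B_i) equals the i-th row of Scale(Q K^⊤) V. -/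
open Matrix Finset

section Aux

variable {M : Type*} [AddCommMonoid M]

lemma lion_forward_sum (L : ℕ) (f g : ℕ → M) (h0 : f 0 = 0)
    (hstep : ∀ i, 1 ≤ i → i ≤ L → f i = f (i - 1) + g i) :
    ∀ i, i ≤ L → f i = ∑ j ∈ Finset.Icc 1 i, g j := by
  intro i
  induction i with
  | zero => intro _; simp [h0]
  | succ n ih =>
    intro hn
    have h1 : f (n + 1) = f n + g (n + 1) := by
      simpa using hstep (n + 1) (Nat.succ_le_succ (Nat.zero_le n)) hn
    rw [h1, ih (Nat.le_of_succ_le hn)]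
    rw [Finset.sum_Icc_succ_top (Nat.succ_le_succ (Nat.zero_le n))]

lemma lion_backward_sum (L : ℕ) (f g : ℕ → M) (hL : f L = g L)
    (hstep : ∀ i, 1 ≤ i → i < L → f i = f (i + 1) + g i) :
    ∀ i, 1 ≤ i → i ≤ L → f i = ∑ j ∈ Finset.Icc i L, g j := by
  have key : ∀ n i, 1 ≤ i → i ≤ L → L - i = n → f i = ∑ j ∈ Finset.Icc i L, g j := by
    intro n
    induction n with
    | zero =>
      intro i h1 h2 h3
      have : i = L := le_antisymm h2 (Nat.le_of_sub_eq_zero h3)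
      subst this
      simp [hL]
    | succ n ih =>
      intro i h1 h2 h3
      have hilt : i < L := by omega
      have h4 : f i = f (i + 1) + g i := hstep i h1 hilt
      have h5 : f (i + 1) = ∑ j ∈ Finset.Icc (i + 1) L, g j :=
        ih (i + 1) (by omega) (by omega) (by omega)
      have hins : Finset.Icc i L = insert i (Finset.Icc (i + 1) L) := by
        ext j; simp only [Finset.mem_Icc, Finset.mem_insert]; omega
      rw [h4, h5, hins, Finset.sum_insert (by simp)]
      rw [add_comm]
  intro i h1 h2
  exact key (L - i) i h1 h2 rfl

lemma lion_sum_Icc_split (L i : ℕ) (h1 : 1 ≤ i) (h2 : i ≤ L) (g : ℕ → M) :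
    (∑ j ∈ Finset.Icc 1 i, g j) + (∑ j ∈ Finset.Icc i L, g j) =
      (∑ j ∈ Finset.Icc 1 L, g j) + g i := by
  have h3 : Finset.Icc i L = insert i (Finset.Icc (i + 1) L) := by
    ext j; simp only [Finset.mem_Icc, Finset.mem_insert]; omega
  rw [h3, Finset.sum_insert (by simp)]
  have h4 : (∑ j ∈ Finset.Icc 1 i, g j) + (∑ j ∈ Finset.Icc (i + 1) L, g j) =
      ∑ j ∈ Finset.Icc 1 L, g j := by
    rw [show Finset.Icc 1 i = Finset.Ioc 0 i from by rw [← Finset.Icc_add_one_left_eq_Ioc]; rfl,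
        Finset.Icc_add_one_left_eq_Ioc,
        show Finset.Icc 1 L = Finset.Ioc 0 L from by rw [← Finset.Icc_add_one_left_eq_Ioc]; rfl]
    exact Finset.sum_Ioc_consecutive g (Nat.zero_le i) h2
  rw [add_comm (g i), ← add_assoc, h4]

end Aux

lemma vecMul_vecMulVec {d : ℕ} (q k v : Fin d → ℝ) :
    q ᵥ* vecMulVec k v = (q ⬝ᵥ k) • v := by
  funext j
  simp [Matrix.vecMul, Matrix.vecMulVec, dotProduct, Finset.sum_mul, mul_assoc]

/-- LION-lit mapping (bidirectional vanilla linear attention, `λ_i = 1`):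
`y^F_i + y^B_i = Σ_{j=1}^{L} ⟨q_i, k_j⟩ v_j` and
`c^F_i + c^B_i = Σ_{j=1}^{L} ⟨q_i, k_j⟩`; hence the non-scaled stacked outputs
equal `Q K^⊤ V`, and when the row sum is nonzero the scaled output
`(y^F_i + y^B_i)/(c^F_i + c^B_i)` equals the `i`-th row of `Scale(Q K^⊤) V`. -/
theorem lion_lit_mapping
    (L d : ℕ) (hL : 0 < L) (hd : 0 < d)
    (q k v : ℕ → (Fin d → ℝ))
    (SF SB : ℕ → Matrix (Fin d) (Fin d) ℝ) (zF zB : ℕ → (Fin d → ℝ))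
    (hSF0 : SF 0 = 0)
    (hSF : ∀ i, 1 ≤ i → i ≤ L → SF i = SF (i - 1) + vecMulVec (k i) (v i))
    (hzF0 : zF 0 = 0)
    (hzF : ∀ i, 1 ≤ i → i ≤ L → zF i = zF (i - 1) + k i)
    (hSBL : SB L = vecMulVec (k L) (v L))
    (hSB : ∀ i, 1 ≤ i → i < L → SB i = SB (i + 1) + vecMulVec (k i) (v i))
    (hzBL : zB L = k L)
    (hzB : ∀ i, 1 ≤ i → i < L → zB i = zB (i + 1) + k i)
    (yF yB : ℕ → (Fin d → ℝ)) (cF cB : ℕ → ℝ)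
    (hyF : ∀ i, yF i = q i ᵥ* SF i - ((1 / 2) * (q i ⬝ᵥ k i)) • v i)
    (hyB : ∀ i, yB i = q i ᵥ* SB i - ((1 / 2) * (q i ⬝ᵥ k i)) • v i)
    (hcF : ∀ i, cF i = q i ⬝ᵥ zF i - (1 / 2) * (q i ⬝ᵥ k i))
    (hcB : ∀ i, cB i = q i ⬝ᵥ zB i - (1 / 2) * (q i ⬝ᵥ k i)) :
    ∀ i, 1 ≤ i → i ≤ L →
      yF i + yB i = ∑ j ∈ Finset.Icc 1 L, (q i ⬝ᵥ k j) • v j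
      ∧ cF i + cB i = ∑ j ∈ Finset.Icc 1 L, (q i ⬝ᵥ k j)
      ∧ ((∑ j ∈ Finset.Icc 1 L, (q i ⬝ᵥ k j)) ≠ 0 →
          (cF i + cB i)⁻¹ • (yF i + yB i) =
            (∑ j ∈ Finset.Icc 1 L, (q i ⬝ᵥ k j))⁻¹ •
              ∑ j ∈ Finset.Icc 1 L, (q i ⬝ᵥ k j) • v j) := by
  have hSFsum := lion_forward_sum L SF (fun j => vecMulVec (k j) (v j)) hSF0 hSF
  have hzFsum := lion_forward_sum L zF k hzF0 hzF
  have hSBsum := lion_backward_sum L SB (fun j => vecMulVec (k j) (v j)) hSBL hSB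
  have hzBsum := lion_backward_sum L zB k hzBL hzB
  intro i h1 h2
  have hy : yF i + yB i = ∑ j ∈ Finset.Icc 1 L, (q i ⬝ᵥ k j) • v j := by
    rw [hyF, hyB]
    rw [hSFsum i h2, hSBsum i h1 h2]
    have hv : ∀ (s : Finset ℕ),
        q i ᵥ* (∑ j ∈ s, vecMulVec (k j) (v j)) = ∑ j ∈ s, (q i ⬝ᵥ k j) • v j := by
      intro s
      induction s using Finset.induction with
      | empty => simp [Matrix.vecMul_zero]
      | insert _ _ h ih =>
        rw [Finset.sum_insert h, Finset.sum_insert h, Matrix.vecMul_add, ih,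
          vecMul_vecMulVec]
    rw [hv, hv]
    have := lion_sum_Icc_split L i h1 h2 (fun j => (q i ⬝ᵥ k j) • v j)
    have hhalf : ((1 : ℝ) / 2) • ((q i ⬝ᵥ k i) • v i) + ((1 : ℝ) / 2) • ((q i ⬝ᵥ k i) • v i)
        = (q i ⬝ᵥ k i) • v i := by
      rw [← add_smul]; norm_num
    calc (∑ j ∈ Finset.Icc 1 i, (q i ⬝ᵥ k j) • v j - ((1/2) * (q i ⬝ᵥ k i)) • v i)
          + (∑ j ∈ Finset.Icc i L, (q i ⬝ᵥ k j) • v j - ((1/2) * (q i ⬝ᵥ k i)) • v i)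
        = ((∑ j ∈ Finset.Icc 1 i, (q i ⬝ᵥ k j) • v j)
            + (∑ j ∈ Finset.Icc i L, (q i ⬝ᵥ k j) • v j)) - (q i ⬝ᵥ k i) • v i := by
          module
      _ = ∑ j ∈ Finset.Icc 1 L, (q i ⬝ᵥ k j) • v j := by rw [this]; abel
  have hc : cF i + cB i = ∑ j ∈ Finset.Icc 1 L, (q i ⬝ᵥ k j) := by
    rw [hcF, hcB, hzFsum i h2, hzBsum i h1 h2]
    have hd2 : ∀ (s : Finset ℕ), q i ⬝ᵥ (∑ j ∈ s, k j) = ∑ j ∈ s, (q i ⬝ᵥ k j) := by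
      intro s
      induction s using Finset.induction with
      | empty => simp [dotProduct]
      | insert _ _ h ih =>
        rw [Finset.sum_insert h, Finset.sum_insert h, dotProduct_add, ih]
    rw [hd2, hd2]
    have := lion_sum_Icc_split L i h1 h2 (fun j => (q i ⬝ᵥ k j))
    linarith [this]
  refine ⟨hy, hc, fun hne => ?_⟩
  rw [hy, hc]
end
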